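/- Let H be a real Banach space, let S : [0,∞) → (H →L H) be a strongly continuous contraction semigroup, and let f : H → H be Lipschitz with constant L > 0. Fix u0 ∈ H and T > 0 with L·T < 1. Then there exists a unique continuous function u : [0,T] → H satisfying u(t) = S(t)u0 + ∫_0^t S(t − s)(f(u(s))) ds for all t ∈ [0,T]. -/

import Mathlib

open MeasureTheory Set

lemma semigroup_joint_cont {H : Type*} [NormedAddCommGroup H] [NormedSpace ℝ H]
    (S : ℝ → H →L[ℝ] H) (hn : ∀ σ : ℝ, ‖S σ‖ ≤ 1)
    (hc : ∀ x : H, Continuous fun σ => S σ x) :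
    Continuous fun p : ℝ × H => S p.1 p.2 := by
  rw [continuous_iff_continuousAt]
  rintro ⟨σ₀, x₀⟩
  have h1 : Filter.Tendsto (fun p : ℝ × H => S p.1 (p.2 - x₀)) (nhds (σ₀, x₀)) (nhds 0) := by
    refine squeeze_zero_norm (a := fun p : ℝ × H => ‖p.2 - x₀‖) (fun p => ?_) ?_
    · exact ((S p.1).le_of_opNorm_le (hn p.1) _).trans (by rw [one_mul])
    · have : Filter.Tendsto (fun p : ℝ × H => ‖p.2 - x₀‖) (nhds (σ₀, x₀)) (nhds ‖x₀ - x₀‖) :=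
        ((continuous_snd.sub continuous_const).norm).tendsto _
      simpa using this
  have h2 : Filter.Tendsto (fun p : ℝ × H => S p.1 x₀) (nhds (σ₀, x₀)) (nhds (S σ₀ x₀)) :=
    ((hc x₀).comp continuous_fst).tendsto _
  have h3 := h1.add h2
  rw [zero_add] at h3
  have : (fun p : ℝ × H => S p.1 (p.2 - x₀) + S p.1 x₀) = fun p : ℝ × H => S p.1 p.2 := by
    funext p; rw [map_sub]; abel
  rw [this] at h3
  exact h3


/-- **Existence and uniqueness of mild solutions (small time via Banach fixed point).**
`S` is a strongly continuous contraction semigroup on the Banach space `H`, `f` is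
`L`-Lipschitz and `L·T < 1`. Then there exists a continuous `u : [0,T] → H` with
`u(t) = S(t) u0 + ∫_0^t S(t-s)(f(u(s))) ds` for all `t ∈ [0,T]`, and any two such
continuous mild solutions agree on `[0,T]`. -/
theorem mild_solution_exists_unique
    {H : Type*} [NormedAddCommGroup H] [NormedSpace ℝ H] [CompleteSpace H]
    (S : ℝ → H →L[ℝ] H)
    (hS0 : S 0 = ContinuousLinearMap.id ℝ H)
    (hSadd : ∀ t s : ℝ, 0 ≤ t → 0 ≤ s → S (t + s) = (S t).comp (S s))
    (hScontr : ∀ t : ℝ, 0 ≤ t → ‖S t‖ ≤ 1)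
    (hScont : ∀ x : H, ContinuousOn (fun t => S t x) (Set.Ici (0 : ℝ)))
    (f : H → H) (L : ℝ) (hL : 0 < L)
    (hf : ∀ a b : H, ‖f a - f b‖ ≤ L * ‖a - b‖)
    (u0 : H) (T : ℝ) (hT : 0 < T) (hLT : L * T < 1) :
    ∃ u : ℝ → H,
      (ContinuousOn u (Set.Icc 0 T) ∧
        ∀ t ∈ Set.Icc (0 : ℝ) T,
          u t = S t u0 + ∫ s in (0 : ℝ)..t, S (t - s) (f (u s))) ∧
      ∀ v : ℝ → H, ContinuousOn v (Set.Icc 0 T) →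
        (∀ t ∈ Set.Icc (0 : ℝ) T,
          v t = S t u0 + ∫ s in (0 : ℝ)..t, S (t - s) (f (v s))) →
        Set.EqOn v u (Set.Icc 0 T) := by
  -- extended semigroup (total on ℝ)
  set St : ℝ → H →L[ℝ] H := fun σ => S (max σ 0) with hStdef
  have hStS : ∀ σ : ℝ, 0 ≤ σ → St σ = S σ := by
    intro σ hσ; simp only [hStdef, max_eq_left hσ]
  have hStnorm : ∀ σ : ℝ, ‖St σ‖ ≤ 1 := fun σ => hScontr _ (le_max_right _ _)
  have hStcont : ∀ x : H, Continuous fun σ => St σ x := by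
    intro x
    exact (hScont x).comp_continuous (continuous_id.max continuous_const)
      (fun σ => le_max_right σ 0)
  have hjoint : Continuous fun p : ℝ × H => St p.1 p.2 :=
    semigroup_joint_cont St hStnorm hStcont
  have hfc : Continuous f := by
    have : LipschitzWith L.toNNReal f := by
      apply LipschitzWith.of_dist_le_mul
      intro a b
      rw [dist_eq_norm, dist_eq_norm]
      exact (hf a b).trans (by rw [Real.coe_toNNReal L hL.le])
    exact this.continuous
  -- the fixed point space
  haveI : Nonempty (Icc (0:ℝ) T) := ⟨⟨0, le_refl 0, hT.le⟩⟩
  -- key conversion of the integral by change of variables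
  have hconv : ∀ (g : ℝ → H) (t : ℝ), 0 ≤ t →
      (∫ σ in (0:ℝ)..t, St σ (f (g (t - σ)))) = ∫ s in (0:ℝ)..t, S (t - s) (f (g s)) := by
    intro g t ht
    have h := intervalIntegral.integral_comp_sub_left
      (a := 0) (b := t) (fun σ => St σ (f (g (t - σ)))) t
    rw [sub_self, sub_zero] at h
    rw [← h]
    apply intervalIntegral.integral_congr
    intro s hs
    rw [uIcc_of_le ht] at hs
    show St (t - s) (f (g (t - (t - s)))) = S (t - s) (f (g s))
    rw [sub_sub_cancel, hStS _ (by linarith [hs.2])]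
  -- integrand continuity facts
  have hGcont : ∀ u : C(Icc (0:ℝ) T, H), Continuous
      (Function.uncurry fun (t σ : ℝ) => St σ (f (u (projIcc 0 T hT.le (t - σ))))) := by
    intro u
    exact hjoint.comp (continuous_snd.prodMk (hfc.comp (u.continuous.comp
      (continuous_projIcc.comp (continuous_fst.sub continuous_snd)))))
  have hslice : ∀ (u : C(Icc (0:ℝ) T, H)) (t : ℝ), Continuous
      (fun σ : ℝ => St σ (f (u (projIcc 0 T hT.le (t - σ))))) := by
    intro u t
    exact (hGcont u).comp (continuous_const.prodMk continuous_id)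
  have hΦcont : ∀ u : C(Icc (0:ℝ) T, H), Continuous
      (fun t : ℝ => St t u0 + ∫ σ in (0:ℝ)..t, St σ (f (u (projIcc 0 T hT.le (t - σ))))) := by
    intro u
    exact (hStcont u0).add
      (intervalIntegral.continuous_parametric_intervalIntegral_of_continuous
        (hGcont u) continuous_id)
  -- the Picard map
  set Φ : C(Icc (0:ℝ) T, H) → C(Icc (0:ℝ) T, H) := fun u =>
    ⟨fun t => St t.val u0 + ∫ σ in (0:ℝ)..t.val,
        St σ (f (u (projIcc 0 T hT.le (t.val - σ)))),
      (hΦcont u).comp continuous_subtype_val⟩ with hΦdef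
  -- contraction
  set K : NNReal := ⟨L * T, by positivity⟩ with hKdef
  have hK : ContractingWith K Φ := by
    constructor
    · exact_mod_cast hLT
    · apply LipschitzWith.of_dist_le_mul
      intro u v
      have hd : (0:ℝ) ≤ L * T * dist u v := by positivity
      show dist (Φ u) (Φ v) ≤ L * T * dist u v
      rw [ContinuousMap.dist_le hd]
      intro t
      rw [dist_eq_norm]
      have h1 := (hslice u t.val).intervalIntegrable (μ := volume) 0 t.val
      have h2 := (hslice v t.val).intervalIntegrable (μ := volume) 0 t.val
      have : Φ u t - Φ v t = ∫ σ in (0:ℝ)..t.val,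
          (St σ (f (u (projIcc 0 T hT.le (t.val - σ)))) -
           St σ (f (v (projIcc 0 T hT.le (t.val - σ))))) := by
        simp only [hΦdef, ContinuousMap.coe_mk]
        rw [intervalIntegral.integral_sub h1 h2]
        abel
      rw [this]
      have hb : ∀ σ ∈ Set.uIoc (0:ℝ) t.val,
          ‖St σ (f (u (projIcc 0 T hT.le (t.val - σ)))) -
           St σ (f (v (projIcc 0 T hT.le (t.val - σ))))‖ ≤ L * dist u v := by
        intro σ _
        rw [← map_sub]
        refine ((St σ).le_of_opNorm_le (hStnorm σ) _).trans ?_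
        rw [one_mul]
        refine (hf _ _).trans ?_
        have := ContinuousMap.dist_apply_le_dist (f := u) (g := v)
          (projIcc 0 T hT.le (t.val - σ))
        rw [dist_eq_norm] at this
        exact mul_le_mul_of_nonneg_left this hL.le
      have := intervalIntegral.norm_integral_le_of_norm_le_const hb
      refine this.trans ?_
      rw [sub_zero]
      have ht0 : |t.val| ≤ T := by
        rw [abs_of_nonneg t.2.1]; exact t.2.2
      calc L * dist u v * |t.val| ≤ L * dist u v * T := by
            exact mul_le_mul_of_nonneg_left ht0 (by positivity)
        _ = L * T * dist u v := by ring
  -- fixed point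
  let w : C(Icc (0:ℝ) T, H) := ContractingWith.fixedPoint Φ hK
  have hwfix : Φ w = w := hK.fixedPoint_isFixedPt
  set u : ℝ → H := fun t => w (projIcc 0 T hT.le t) with hudef
  have hucont : Continuous u := w.continuous.comp continuous_projIcc
  have hueq : ∀ t ∈ Set.Icc (0:ℝ) T,
      u t = S t u0 + ∫ s in (0 : ℝ)..t, S (t - s) (f (u s)) := by
    intro t ht
    have h1 : u t = w ⟨t, ht⟩ := by rw [hudef]; simp [projIcc_of_mem hT.le ht]
    have h2 : Φ w ⟨t, ht⟩ = w ⟨t, ht⟩ := by rw [hwfix]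
    rw [h1, ← h2]
    show St t u0 + (∫ σ in (0:ℝ)..t, St σ (f (w (projIcc 0 T hT.le (t - σ))))) = _
    rw [hStS t ht.1]
    congr 1
    exact hconv u t ht.1
  refine ⟨u, ⟨hucont.continuousOn, hueq⟩, ?_⟩
  -- uniqueness
  intro v hvcont hveq t ht
  set vc : C(Icc (0:ℝ) T, H) := ⟨fun s => v s.val, hvcont.restrict⟩ with hvcdef
  have hvfix : Function.IsFixedPt Φ vc := by
    apply ContinuousMap.ext
    intro s
    show St s.val u0 + (∫ σ in (0:ℝ)..s.val,
        St σ (f (vc (projIcc 0 T hT.le (s.val - σ))))) = v s.val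
    have hcongr : (∫ σ in (0:ℝ)..s.val, St σ (f (vc (projIcc 0 T hT.le (s.val - σ)))))
        = ∫ σ in (0:ℝ)..s.val, St σ (f (v (s.val - σ))) := by
      apply intervalIntegral.integral_congr
      intro σ hσ
      rw [uIcc_of_le s.2.1] at hσ
      have hmem : s.val - σ ∈ Icc (0:ℝ) T := ⟨by linarith [hσ.2], by linarith [hσ.1, s.2.2]⟩
      simp only [hvcdef, ContinuousMap.coe_mk]
      rw [projIcc_of_mem hT.le hmem]
      rfl
    rw [hcongr, hconv v s.val s.2.1, hStS _ s.2.1, ← hveq s.val s.2]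
  have hveqw : vc = w := hK.fixedPoint_unique hvfix
  have : v t = vc ⟨t, ht⟩ := rfl
  rw [this, hveqw, hudef]
  simp [projIcc_of_mem hT.le ht]
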